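/- Equivalence of the two-filter smoother and the RTS smoother: under the linear-Gaussian model assumptions, suppose additionally that P_{k+1|k} = F_k P_{k|k} F_kᵀ + Q_k is invertible for k = 1, …, T−1. Then for every k = 1, …, T−1, the matrix I + P_{k|k} J_{k|k+1:T} is invertible and the two-filter combination formulas reproduce the RTS smoother output: (I + P_{k|k} J_{k|k+1:T})⁻¹ (x̄_{k|k} + P_{k|k} η_{k|k+1:T}) = x̄_{k|T} and (I + P_{k|k} J_{k|k+1:T})⁻¹ P_{k|k} = P_{k|T}. -/

import Mathlib

open Matrix

/-- The data of a linear-Gaussian state-space model. -/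
structure LGModel (n m : ℕ) where
  T : ℕ
  F : ℕ → Matrix (Fin n) (Fin n) ℝ
  H : ℕ → Matrix (Fin m) (Fin n) ℝ
  u : ℕ → Fin n → ℝ
  d : ℕ → Fin m → ℝ
  Q : ℕ → Matrix (Fin n) (Fin n) ℝ
  R : ℕ → Matrix (Fin m) (Fin m) ℝ
  y : ℕ → Fin m → ℝ
  x0 : Fin n → ℝ
  P0 : Matrix (Fin n) (Fin n) ℝ

variable {n m : ℕ}

/-- The Kalman filter recursion: `kf M k = (x̄_{k|k}, P_{k|k})`. -/
noncomputable def LGModel.kf (M : LGModel n m) : ℕ → (Fin n → ℝ) × Matrix (Fin n) (Fin n) ℝ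
  | 0 => (M.x0, M.P0)
  | k + 1 =>
    let prev := LGModel.kf M k
    let xp := M.F k *ᵥ prev.1 + M.u k
    let Pp := M.F k * prev.2 * (M.F k)ᵀ + M.Q k
    let S := M.H (k + 1) * Pp * (M.H (k + 1))ᵀ + M.R (k + 1)
    let K := Pp * (M.H (k + 1))ᵀ * S⁻¹
    (xp + K *ᵥ (M.y (k + 1) - M.H (k + 1) *ᵥ xp - M.d (k + 1)),
     Pp - K * M.H (k + 1) * Pp)

/-- The Rauch–Tung–Striebel backward recursion: `rts M j = (x̄_{T-j|T}, P_{T-j|T})`. -/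
noncomputable def LGModel.rts (M : LGModel n m) : ℕ → (Fin n → ℝ) × Matrix (Fin n) (Fin n) ℝ
  | 0 => M.kf M.T
  | j + 1 =>
    let k := M.T - j - 1
    let P := (M.kf k).2
    let Pp := M.F k * P * (M.F k)ᵀ + M.Q k
    let G := P * (M.F k)ᵀ * Pp⁻¹
    ((M.kf k).1 + G *ᵥ ((LGModel.rts M j).1 - (M.F k *ᵥ (M.kf k).1 + M.u k)),
     P + G * ((LGModel.rts M j).2 - Pp) * Gᵀ)

/-- The backward information filter recursion (updated quantities):
`bif M j = (η_{T-j|T-j:T}, J_{T-j|T-j:T})`. -/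
noncomputable def LGModel.bif (M : LGModel n m) : ℕ → (Fin n → ℝ) × Matrix (Fin n) (Fin n) ℝ
  | 0 => (((M.H M.T)ᵀ * (M.R M.T)⁻¹) *ᵥ (M.y M.T - M.d M.T),
          (M.H M.T)ᵀ * (M.R M.T)⁻¹ * M.H M.T)
  | j + 1 =>
    let k := M.T - j - 1
    let prev := LGModel.bif M j
    let G := (M.F k)ᵀ * (1 + prev.2 * M.Q k)⁻¹
    (G *ᵥ (prev.1 - prev.2 *ᵥ M.u k) + ((M.H k)ᵀ * (M.R k)⁻¹) *ᵥ (M.y k - M.d k),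
     G * prev.2 * M.F k + (M.H k)ᵀ * (M.R k)⁻¹ * M.H k)

/-- The predicted backward information quantities `(η_{k|k+1:T}, J_{k|k+1:T})`. -/
noncomputable def LGModel.bpred (M : LGModel n m) (k : ℕ) :
    (Fin n → ℝ) × Matrix (Fin n) (Fin n) ℝ :=
  let prev := M.bif (M.T - k - 1)
  let G := (M.F k)ᵀ * (1 + prev.2 * M.Q k)⁻¹
  (G *ᵥ (prev.1 - prev.2 *ᵥ M.u k), G * prev.2 * M.F k)

set_option maxHeartbeats 2000000
section TwoFilterHelpers

variable {n m : ℕ}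

private lemma psd_symm {A : Matrix (Fin n) (Fin n) ℝ} (h : A.PosSemidef) : Aᵀ = A := by
  have := h.1
  rwa [Matrix.IsHermitian, Matrix.conjTranspose_eq_transpose_of_trivial] at this

private lemma psd_congT {k : ℕ} {A : Matrix (Fin n) (Fin n) ℝ} (h : A.PosSemidef)
    (B : Matrix (Fin n) (Fin k) ℝ) : (Bᵀ * A * B).PosSemidef := by
  simpa [Matrix.conjTranspose_eq_transpose_of_trivial] using h.conjTranspose_mul_mul_same B

private lemma psd_congTr {k : ℕ} {A : Matrix (Fin n) (Fin n) ℝ} (h : A.PosSemidef)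
    (B : Matrix (Fin k) (Fin n) ℝ) : (B * A * Bᵀ).PosSemidef := by
  simpa [Matrix.conjTranspose_eq_transpose_of_trivial] using h.mul_mul_conjTranspose_same B

private lemma det_comm_unit {A B : Matrix (Fin n) (Fin n) ℝ}
    (h : IsUnit (1 + A * B).det) : IsUnit (1 + B * A).det := by
  rwa [Matrix.det_one_add_mul_comm] at h

open scoped MatrixOrder in
private lemma isUnit_one_add_psd {A B : Matrix (Fin n) (Fin n) ℝ}
    (hA : A.PosSemidef) (hB : B.PosSemidef) : IsUnit (1 + A * B).det := by
  have hs := (CFC.sqrt_nonneg B).posSemidef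
  have hpd : ((1 : Matrix (Fin n) (Fin n) ℝ) + CFC.sqrt B * A * CFC.sqrt B).PosDef := by
    have hc : (CFC.sqrt B * A * CFC.sqrt B).PosSemidef := by
      have := psd_congT hA (CFC.sqrt B)
      rwa [psd_symm hs] at this
    exact Matrix.PosDef.add_posSemidef Matrix.PosDef.one hc
  have hdet : (1 + A * B).det = (1 + CFC.sqrt B * A * CFC.sqrt B).det := by
    calc (1 + A * B).det = (1 + (A * CFC.sqrt B) * CFC.sqrt B).det := by
          rw [Matrix.mul_assoc, CFC.sqrt_mul_sqrt_self B hB.nonneg]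
      _ = (1 + CFC.sqrt B * (A * CFC.sqrt B)).det := Matrix.det_one_add_mul_comm _ _
      _ = (1 + CFC.sqrt B * A * CFC.sqrt B).det := by rw [Matrix.mul_assoc]
  rw [hdet]
  exact hpd.det_pos.ne'.isUnit

private lemma inv_mul_eq {X U V : Matrix (Fin n) (Fin n) ℝ} (hX : IsUnit X.det)
    (h : X * V = U) : X⁻¹ * U = V := by
  rw [← h, ← Matrix.mul_assoc, Matrix.nonsing_inv_mul _ hX, Matrix.one_mul]

private lemma inv_mulVec_eq {X : Matrix (Fin n) (Fin n) ℝ} {u v : Fin n → ℝ}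
    (hX : IsUnit X.det) (h : X *ᵥ v = u) : X⁻¹ *ᵥ u = v := by
  rw [← h, Matrix.mulVec_mulVec, Matrix.nonsing_inv_mul _ hX, Matrix.one_mulVec]

private lemma swap_inv {A B : Matrix (Fin n) (Fin n) ℝ} (h1 : IsUnit (1 + A * B).det) :
    (1 + A * B)⁻¹ * A = A * (1 + B * A)⁻¹ := by
  have h2 : IsUnit (1 + B * A).det := det_comm_unit h1
  refine inv_mul_eq h1 ?_
  calc (1 + A * B) * (A * (1 + B * A)⁻¹) = (A * (1 + B * A)) * (1 + B * A)⁻¹ := by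
        noncomm_ring
    _ = A := Matrix.mul_nonsing_inv_cancel_right _ _ h2

private lemma psdBJ {J Q : Matrix (Fin n) (Fin n) ℝ} (hJ : J.PosSemidef) (hQ : Q.PosSemidef)
    (hu : IsUnit (1 + J * Q).det) : ((1 + J * Q)⁻¹ * J).PosSemidef := by
  have hu2 : IsUnit (1 + Q * J).det := det_comm_unit hu
  have hswap : (1 + J * Q)⁻¹ * J = J * (1 + Q * J)⁻¹ := swap_inv hu
  refine Matrix.PosSemidef.of_dotProduct_mulVec_nonneg ?_ ?_
  · show ((1 + J * Q)⁻¹ * J)ᴴ = _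
    rw [Matrix.conjTranspose_eq_transpose_of_trivial, hswap, Matrix.transpose_mul,
      Matrix.transpose_nonsing_inv, Matrix.transpose_add, Matrix.transpose_one,
      Matrix.transpose_mul, psd_symm hJ, psd_symm hQ]
    exact hswap
  · intro x
    simp only [star_trivial]
    rw [hswap, ← Matrix.mulVec_mulVec]
    set y := (1 + Q * J)⁻¹ *ᵥ x with hy
    have hx : x = (1 + Q * J) *ᵥ y := by
      rw [hy, Matrix.mulVec_mulVec, Matrix.mul_nonsing_inv _ hu2, Matrix.one_mulVec]
    rw [hx]
    have expand : ((1 + Q * J) *ᵥ y) ⬝ᵥ (J *ᵥ y)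
        = y ⬝ᵥ (J *ᵥ y) + (J *ᵥ y) ⬝ᵥ (Q *ᵥ (J *ᵥ y)) := by
      rw [Matrix.add_mulVec, Matrix.one_mulVec, add_dotProduct]
      congr 1
      rw [← Matrix.mulVec_mulVec, dotProduct_comm]
    rw [expand]
    have h1 := hJ.dotProduct_mulVec_nonneg y
    have h2 := hQ.dotProduct_mulVec_nonneg (J *ᵥ y)
    simp only [star_trivial] at h1 h2
    positivity

private lemma updCov {Pp : Matrix (Fin n) (Fin n) ℝ} {H : Matrix (Fin m) (Fin n) ℝ}
    {R : Matrix (Fin m) (Fin m) ℝ}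
    (hR : IsUnit R.det) (hS : IsUnit (H * Pp * Hᵀ + R).det) :
    (1 + Pp * (Hᵀ * R⁻¹ * H)) * (Pp - Pp * Hᵀ * (H * Pp * Hᵀ + R)⁻¹ * H * Pp) = Pp := by
  have hSc : (H * Pp * Hᵀ + R) * (H * Pp * Hᵀ + R)⁻¹ = 1 := Matrix.mul_nonsing_inv _ hS
  have hRc : R⁻¹ * R = 1 := Matrix.nonsing_inv_mul _ hR
  generalize hSi : (H * Pp * Hᵀ + R)⁻¹ = Si at *
  generalize hRi : R⁻¹ = Ri at *
  have cS : ∀ (X : Matrix (Fin m) (Fin n) ℝ),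
      H * (Pp * (Hᵀ * (Si * X))) = X - R * (Si * X) := by
    intro X
    have h1 : H * Pp * Hᵀ * Si = 1 - R * Si := by rw [← hSc]; noncomm_ring
    calc H * (Pp * (Hᵀ * (Si * X))) = (H * Pp * Hᵀ * Si) * X := by
          simp only [Matrix.mul_assoc]
      _ = (1 - R * Si) * X := by rw [h1]
      _ = X - R * (Si * X) := by rw [Matrix.sub_mul, Matrix.one_mul, Matrix.mul_assoc]
  have cR : ∀ (X : Matrix (Fin m) (Fin n) ℝ), Ri * (R * X) = X := fun X => by
    rw [← Matrix.mul_assoc, hRc, Matrix.one_mul]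
  simp only [Matrix.mul_add, Matrix.add_mul, Matrix.mul_sub, Matrix.sub_mul,
    Matrix.mul_assoc, Matrix.one_mul, Matrix.mul_one, cS, cR]
  abel

private lemma updMean {Pp : Matrix (Fin n) (Fin n) ℝ} {H : Matrix (Fin m) (Fin n) ℝ}
    {R : Matrix (Fin m) (Fin m) ℝ}
    (hR : IsUnit R.det) (hS : IsUnit (H * Pp * Hᵀ + R).det)
    (xp : Fin n → ℝ) (z : Fin m → ℝ) :
    (1 + Pp * (Hᵀ * R⁻¹ * H)) *ᵥ
      (xp + (Pp * Hᵀ * (H * Pp * Hᵀ + R)⁻¹) *ᵥ (z - H *ᵥ xp)) =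
      xp + (Pp * (Hᵀ * R⁻¹)) *ᵥ z := by
  have hSc : (H * Pp * Hᵀ + R) * (H * Pp * Hᵀ + R)⁻¹ = 1 := Matrix.mul_nonsing_inv _ hS
  have hRc : R⁻¹ * R = 1 := Matrix.nonsing_inv_mul _ hR
  generalize hSi : (H * Pp * Hᵀ + R)⁻¹ = Si at *
  generalize hRi : R⁻¹ = Ri at *
  have cSv : ∀ (v : Fin m → ℝ),
      H *ᵥ (Pp *ᵥ (Hᵀ *ᵥ (Si *ᵥ v))) = v - R *ᵥ (Si *ᵥ v) := by
    intro v
    have h1 : H * Pp * Hᵀ * Si = 1 - R * Si := by rw [← hSc]; noncomm_ring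
    calc H *ᵥ (Pp *ᵥ (Hᵀ *ᵥ (Si *ᵥ v))) = (H * Pp * Hᵀ * Si) *ᵥ v := by
          simp only [Matrix.mulVec_mulVec, Matrix.mul_assoc]
      _ = (1 - R * Si) *ᵥ v := by rw [h1]
      _ = v - R *ᵥ (Si *ᵥ v) := by
          rw [Matrix.sub_mulVec, Matrix.one_mulVec, ← Matrix.mulVec_mulVec]
  have cRv : ∀ (v : Fin m → ℝ), Ri *ᵥ (R *ᵥ v) = v := fun v => by
    rw [Matrix.mulVec_mulVec, hRc, Matrix.one_mulVec]
  simp only [← Matrix.mulVec_mulVec, Matrix.mulVec_add, Matrix.mulVec_sub,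
    Matrix.add_mulVec, Matrix.sub_mulVec, Matrix.one_mulVec, cSv, cRv]
  abel

private lemma joseph {Pp : Matrix (Fin n) (Fin n) ℝ} {H : Matrix (Fin m) (Fin n) ℝ}
    {R : Matrix (Fin m) (Fin m) ℝ} (hPps : Ppᵀ = Pp) (hRs : Rᵀ = R)
    (hS : IsUnit (H * Pp * Hᵀ + R).det) :
    Pp - Pp * Hᵀ * (H * Pp * Hᵀ + R)⁻¹ * H * Pp =
      (1 - Pp * Hᵀ * (H * Pp * Hᵀ + R)⁻¹ * H) * Pp *
        (1 - Pp * Hᵀ * (H * Pp * Hᵀ + R)⁻¹ * H)ᵀ +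
      (Pp * Hᵀ * (H * Pp * Hᵀ + R)⁻¹) * R * (Pp * Hᵀ * (H * Pp * Hᵀ + R)⁻¹)ᵀ := by
  have hSsym : (H * Pp * Hᵀ + R)ᵀ = H * Pp * Hᵀ + R := by
    simp [Matrix.transpose_add, Matrix.transpose_mul, hPps, hRs, Matrix.mul_assoc]
  have hSinvsym : ((H * Pp * Hᵀ + R)⁻¹)ᵀ = (H * Pp * Hᵀ + R)⁻¹ := by
    rw [Matrix.transpose_nonsing_inv, hSsym]
  have hSc : (H * Pp * Hᵀ + R)⁻¹ * (H * Pp * Hᵀ + R) = 1 := Matrix.nonsing_inv_mul _ hS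
  generalize hSi : (H * Pp * Hᵀ + R)⁻¹ = Si at *
  have cS : ∀ (X : Matrix (Fin m) (Fin n) ℝ),
      Si * (H * (Pp * (Hᵀ * X))) = X - Si * (R * X) := by
    intro X
    have h1 : Si * (H * Pp * Hᵀ) = 1 - Si * R := by rw [← hSc]; noncomm_ring
    calc Si * (H * (Pp * (Hᵀ * X))) = (Si * (H * Pp * Hᵀ)) * X := by
          simp only [Matrix.mul_assoc]
      _ = (1 - Si * R) * X := by rw [h1]
      _ = X - Si * (R * X) := by rw [Matrix.sub_mul, Matrix.one_mul, Matrix.mul_assoc]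
  simp only [Matrix.transpose_sub, Matrix.transpose_mul, Matrix.transpose_one,
    Matrix.transpose_transpose, hSinvsym, hPps, hRs]
  simp only [Matrix.mul_add, Matrix.add_mul, Matrix.mul_sub, Matrix.sub_mul,
    Matrix.mul_assoc, Matrix.one_mul, Matrix.mul_one, cS]
  abel

private lemma stepCov {P F Q J Pp : Matrix (Fin n) (Fin n) ℝ}
    (hPpdef : Pp = F * P * Fᵀ + Q) (hPsym : Pᵀ = P) (hQsym : Qᵀ = Q)
    (hJQ : IsUnit (1 + J * Q).det) (hPpu : IsUnit Pp.det)
    (hV : IsUnit (1 + Pp * J).det)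
    (hU : IsUnit (1 + P * (Fᵀ * (1 + J * Q)⁻¹ * J * F)).det) :
    (1 + P * (Fᵀ * (1 + J * Q)⁻¹ * J * F))⁻¹ * P =
      P + P * Fᵀ * Pp⁻¹ * ((1 + Pp * J)⁻¹ * Pp - Pp) * (P * Fᵀ * Pp⁻¹)ᵀ := by
  have hW : IsUnit (1 + J * Pp).det := det_comm_unit hV
  have hQJ : IsUnit (1 + Q * J).det := det_comm_unit hJQ
  have sV : (1 + Pp * J)⁻¹ * Pp = Pp * (1 + J * Pp)⁻¹ := swap_inv hV
  have sW : (1 + J * Pp)⁻¹ * J = J * (1 + Pp * J)⁻¹ := swap_inv hW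
  have sB : (1 + J * Q)⁻¹ * J = J * (1 + Q * J)⁻¹ := swap_inv hJQ
  have f3 : ((1 + J * Q)⁻¹ * J) * (1 + Q * J) = J := by
    rw [sB]; exact Matrix.nonsing_inv_mul_cancel_right _ _ hQJ
  have f4 : (1 : Matrix (Fin n) (Fin n) ℝ) - (F * P * Fᵀ) * (J * (1 + Pp * J)⁻¹) =
      (1 + Q * J) * (1 + Pp * J)⁻¹ := by
    have h1 : (1 + Pp * J) * (1 + Pp * J)⁻¹ = 1 := Matrix.mul_nonsing_inv _ hV
    calc (1 : Matrix (Fin n) (Fin n) ℝ) - (F * P * Fᵀ) * (J * (1 + Pp * J)⁻¹)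
        = (1 + Pp * J) * (1 + Pp * J)⁻¹ - (F * P * Fᵀ) * (J * (1 + Pp * J)⁻¹) := by rw [h1]
      _ = (1 + Q * J) * (1 + Pp * J)⁻¹ := by rw [hPpdef]; noncomm_ring
  have f5 : ((1 + J * Q)⁻¹ * J) -
      ((1 + J * Q)⁻¹ * J) * ((F * P * Fᵀ) * (J * (1 + Pp * J)⁻¹)) = J * (1 + Pp * J)⁻¹ := by
    calc ((1 + J * Q)⁻¹ * J) - ((1 + J * Q)⁻¹ * J) * ((F * P * Fᵀ) * (J * (1 + Pp * J)⁻¹))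
        = ((1 + J * Q)⁻¹ * J) * (1 - (F * P * Fᵀ) * (J * (1 + Pp * J)⁻¹)) := by noncomm_ring
      _ = ((1 + J * Q)⁻¹ * J) * ((1 + Q * J) * (1 + Pp * J)⁻¹) := by rw [f4]
      _ = (((1 + J * Q)⁻¹ * J) * (1 + Q * J)) * (1 + Pp * J)⁻¹ := by
          simp only [Matrix.mul_assoc]
      _ = J * (1 + Pp * J)⁻¹ := by rw [f3]
  have main : (1 + P * (Fᵀ * (1 + J * Q)⁻¹ * J * F)) *
      (P - P * Fᵀ * (J * (1 + Pp * J)⁻¹) * F * P) = P := by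
    have expand : (1 + P * (Fᵀ * (1 + J * Q)⁻¹ * J * F)) *
        (P - P * Fᵀ * (J * (1 + Pp * J)⁻¹) * F * P) =
        P + P * Fᵀ * (((1 + J * Q)⁻¹ * J) - J * (1 + Pp * J)⁻¹ -
          ((1 + J * Q)⁻¹ * J) * ((F * P * Fᵀ) * (J * (1 + Pp * J)⁻¹))) * (F * P) := by
      noncomm_ring
    rw [expand, sub_right_comm, f5, sub_self]
    simp
  have hPpsym : Ppᵀ = Pp := by
    rw [hPpdef]
    simp [Matrix.transpose_add, Matrix.transpose_mul, hPsym, hQsym, Matrix.mul_assoc]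
  have rhsT : (P * Fᵀ * Pp⁻¹)ᵀ = Pp⁻¹ * (F * P) := by
    rw [Matrix.transpose_mul, Matrix.transpose_mul, Matrix.transpose_nonsing_inv, hPpsym,
      Matrix.transpose_transpose, hPsym]
  have rhs2 : (1 + Pp * J)⁻¹ * Pp - Pp = -(Pp * ((1 + J * Pp)⁻¹ * (J * Pp))) := by
    have h1 : (1 + J * Pp)⁻¹ * (1 + J * Pp) = 1 := Matrix.nonsing_inv_mul _ hW
    calc (1 + Pp * J)⁻¹ * Pp - Pp
        = Pp * (1 + J * Pp)⁻¹ - Pp * ((1 + J * Pp)⁻¹ * (1 + J * Pp)) := by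
          rw [sV, h1, Matrix.mul_one]
      _ = -(Pp * ((1 + J * Pp)⁻¹ * (J * Pp))) := by noncomm_ring
  have prodG : P * Fᵀ * Pp⁻¹ * (Pp * ((1 + J * Pp)⁻¹ * (J * Pp))) * (Pp⁻¹ * (F * P)) =
      P * Fᵀ * (J * (1 + Pp * J)⁻¹) * F * P := by
    have c1 : Pp⁻¹ * Pp = 1 := Matrix.nonsing_inv_mul _ hPpu
    have c2 : Pp * Pp⁻¹ = 1 := Matrix.mul_nonsing_inv _ hPpu
    calc P * Fᵀ * Pp⁻¹ * (Pp * ((1 + J * Pp)⁻¹ * (J * Pp))) * (Pp⁻¹ * (F * P))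
        = P * Fᵀ * ((Pp⁻¹ * Pp) * ((1 + J * Pp)⁻¹ * J) * (Pp * Pp⁻¹)) * (F * P) := by
          noncomm_ring
      _ = P * Fᵀ * ((1 + J * Pp)⁻¹ * J) * (F * P) := by
          rw [c1, c2, Matrix.one_mul, Matrix.mul_one]
      _ = P * Fᵀ * (J * (1 + Pp * J)⁻¹) * F * P := by rw [sW]; noncomm_ring
  have rhseq : P + P * Fᵀ * Pp⁻¹ * ((1 + Pp * J)⁻¹ * Pp - Pp) * (P * Fᵀ * Pp⁻¹)ᵀ =
      P - P * Fᵀ * (J * (1 + Pp * J)⁻¹) * F * P := by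
    rw [rhsT, rhs2]
    calc P + P * Fᵀ * Pp⁻¹ * -(Pp * ((1 + J * Pp)⁻¹ * (J * Pp))) * (Pp⁻¹ * (F * P))
        = P - P * Fᵀ * Pp⁻¹ * (Pp * ((1 + J * Pp)⁻¹ * (J * Pp))) * (Pp⁻¹ * (F * P)) := by
          noncomm_ring
      _ = P - P * Fᵀ * (J * (1 + Pp * J)⁻¹) * F * P := by rw [prodG]
  rw [rhseq]
  exact inv_mul_eq hU main

private lemma stepMean {P F Q J Pp : Matrix (Fin n) (Fin n) ℝ}
    (hPpdef : Pp = F * P * Fᵀ + Q)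
    (hJQ : IsUnit (1 + J * Q).det) (hPpu : IsUnit Pp.det)
    (hV : IsUnit (1 + Pp * J).det)
    (hU : IsUnit (1 + P * (Fᵀ * (1 + J * Q)⁻¹ * J * F)).det)
    (x u η : Fin n → ℝ) :
    (1 + P * (Fᵀ * (1 + J * Q)⁻¹ * J * F))⁻¹ *ᵥ
      (x + P *ᵥ ((Fᵀ * (1 + J * Q)⁻¹) *ᵥ (η - J *ᵥ u))) =
    x + (P * Fᵀ * Pp⁻¹) *ᵥ
      ((1 + Pp * J)⁻¹ *ᵥ ((F *ᵥ x + u) + Pp *ᵥ η) - (F *ᵥ x + u)) := by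
  have hW : IsUnit (1 + J * Pp).det := det_comm_unit hV
  have sV : (1 + Pp * J)⁻¹ * Pp = Pp * (1 + J * Pp)⁻¹ := swap_inv hV
  have s1 : ∀ xp : Fin n → ℝ, (1 + Pp * J)⁻¹ *ᵥ (xp + Pp *ᵥ η) - xp =
      (Pp * (1 + J * Pp)⁻¹) *ᵥ (η - J *ᵥ xp) := by
    intro xp
    have hc : (1 + Pp * J)⁻¹ *ᵥ ((1 + Pp * J) *ᵥ xp) = xp := by
      rw [Matrix.mulVec_mulVec, Matrix.nonsing_inv_mul _ hV, Matrix.one_mulVec]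
    calc (1 + Pp * J)⁻¹ *ᵥ (xp + Pp *ᵥ η) - xp
        = (1 + Pp * J)⁻¹ *ᵥ (xp + Pp *ᵥ η) - (1 + Pp * J)⁻¹ *ᵥ ((1 + Pp * J) *ᵥ xp) := by
          rw [hc]
      _ = (1 + Pp * J)⁻¹ *ᵥ ((xp + Pp *ᵥ η) - (1 + Pp * J) *ᵥ xp) := by
          rw [Matrix.mulVec_sub]
      _ = (1 + Pp * J)⁻¹ *ᵥ (Pp *ᵥ (η - J *ᵥ xp)) := by
          simp only [Matrix.add_mulVec, Matrix.one_mulVec, Matrix.mulVec_sub,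
            Matrix.mulVec_add, ← Matrix.mulVec_mulVec]
          abel
      _ = (Pp * (1 + J * Pp)⁻¹) *ᵥ (η - J *ᵥ xp) := by rw [Matrix.mulVec_mulVec, sV]
  have s2m : P * Fᵀ * Pp⁻¹ * (Pp * (1 + J * Pp)⁻¹) = P * Fᵀ * (1 + J * Pp)⁻¹ := by
    have c1 : Pp⁻¹ * Pp = 1 := Matrix.nonsing_inv_mul _ hPpu
    calc P * Fᵀ * Pp⁻¹ * (Pp * (1 + J * Pp)⁻¹)
        = P * Fᵀ * ((Pp⁻¹ * Pp) * (1 + J * Pp)⁻¹) := by noncomm_ring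
      _ = P * Fᵀ * (1 + J * Pp)⁻¹ := by rw [c1, Matrix.one_mul]
  have k1 : (1 + J * Q)⁻¹ * (1 + J * Pp) =
      1 + ((1 + J * Q)⁻¹ * J) * (F * P * Fᵀ) := by
    have hBc : (1 + J * Q)⁻¹ * (1 + J * Q) = 1 := Matrix.nonsing_inv_mul _ hJQ
    calc (1 + J * Q)⁻¹ * (1 + J * Pp)
        = (1 + J * Q)⁻¹ * (1 + J * Q) + ((1 + J * Q)⁻¹ * J) * (F * P * Fᵀ) := by
          rw [hPpdef]; noncomm_ring
      _ = 1 + ((1 + J * Q)⁻¹ * J) * (F * P * Fᵀ) := by rw [hBc]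
  have m3 : (1 + P * (Fᵀ * (1 + J * Q)⁻¹ * J * F)) * (P * Fᵀ * (1 + J * Pp)⁻¹) =
      P * (Fᵀ * (1 + J * Q)⁻¹) := by
    calc (1 + P * (Fᵀ * (1 + J * Q)⁻¹ * J * F)) * (P * Fᵀ * (1 + J * Pp)⁻¹)
        = P * Fᵀ * ((1 + ((1 + J * Q)⁻¹ * J) * (F * P * Fᵀ)) * (1 + J * Pp)⁻¹) := by
          noncomm_ring
      _ = P * Fᵀ * (((1 + J * Q)⁻¹ * (1 + J * Pp)) * (1 + J * Pp)⁻¹) := by rw [k1]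
      _ = P * Fᵀ * (1 + J * Q)⁻¹ := by
          rw [Matrix.mul_nonsing_inv_cancel_right _ _ hW]
      _ = P * (Fᵀ * (1 + J * Q)⁻¹) := by rw [Matrix.mul_assoc]
  have main : (1 + P * (Fᵀ * (1 + J * Q)⁻¹ * J * F)) *ᵥ
      (x + (P * Fᵀ * (1 + J * Pp)⁻¹) *ᵥ (η - J *ᵥ (F *ᵥ x + u))) =
      x + P *ᵥ ((Fᵀ * (1 + J * Q)⁻¹) *ᵥ (η - J *ᵥ u)) := by
    calc (1 + P * (Fᵀ * (1 + J * Q)⁻¹ * J * F)) *ᵥ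
        (x + (P * Fᵀ * (1 + J * Pp)⁻¹) *ᵥ (η - J *ᵥ (F *ᵥ x + u)))
        = (1 + P * (Fᵀ * (1 + J * Q)⁻¹ * J * F)) *ᵥ x +
          ((1 + P * (Fᵀ * (1 + J * Q)⁻¹ * J * F)) * (P * Fᵀ * (1 + J * Pp)⁻¹)) *ᵥ
            (η - J *ᵥ (F *ᵥ x + u)) := by
          rw [Matrix.mulVec_add, Matrix.mulVec_mulVec]
      _ = (1 + P * (Fᵀ * (1 + J * Q)⁻¹ * J * F)) *ᵥ x +
          (P * (Fᵀ * (1 + J * Q)⁻¹)) *ᵥ (η - J *ᵥ (F *ᵥ x + u)) := by rw [m3]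
      _ = x + P *ᵥ ((Fᵀ * (1 + J * Q)⁻¹) *ᵥ (η - J *ᵥ u)) := by
          simp only [Matrix.add_mulVec, Matrix.one_mulVec, Matrix.mulVec_add,
            Matrix.mulVec_sub, Matrix.mulVec_mulVec, Matrix.mul_assoc]
          abel
  have veq : x + (P * Fᵀ * Pp⁻¹) *ᵥ
      ((1 + Pp * J)⁻¹ *ᵥ ((F *ᵥ x + u) + Pp *ᵥ η) - (F *ᵥ x + u)) =
      x + (P * Fᵀ * (1 + J * Pp)⁻¹) *ᵥ (η - J *ᵥ (F *ᵥ x + u)) := by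
    rw [s1 (F *ᵥ x + u), Matrix.mulVec_mulVec, s2m]
  rw [veq]
  exact inv_mulVec_eq hU main

end TwoFilterHelpers

section TwoFilterPSD

variable {n m : ℕ}

private lemma kf_psd (M : LGModel n m)
    (hQ : ∀ k, k < M.T → (M.Q k).PosSemidef)
    (hR : ∀ k, 1 ≤ k → k ≤ M.T → (M.R k).PosDef)
    (hP0 : M.P0.PosSemidef) :
    ∀ k, k ≤ M.T → ((M.kf k).2).PosSemidef := by
  intro k
  induction k with
  | zero => intro _; simpa [LGModel.kf] using hP0
  | succ k ih =>
    intro hk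
    have hP := ih (by omega)
    have hQk := hQ k (by omega)
    have hRk := hR (k + 1) (by omega) hk
    have hPp : (M.F k * (M.kf k).2 * (M.F k)ᵀ + M.Q k).PosSemidef :=
      (psd_congTr hP (M.F k)).add hQk
    have hSpd : (M.H (k + 1) * (M.F k * (M.kf k).2 * (M.F k)ᵀ + M.Q k) * (M.H (k + 1))ᵀ +
        M.R (k + 1)).PosDef :=
      Matrix.PosDef.posSemidef_add (psd_congTr hPp (M.H (k + 1))) hRk
    have hSu := hSpd.det_pos.ne'.isUnit
    show ((M.kf (k + 1)).2).PosSemidef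
    simp only [LGModel.kf]
    rw [joseph (psd_symm hPp) (psd_symm hRk.posSemidef) hSu]
    exact (psd_congTr hPp _).add (psd_congTr hRk.posSemidef _)

private lemma bif_psd (M : LGModel n m) (hT : 1 ≤ M.T)
    (hQ : ∀ k, k < M.T → (M.Q k).PosSemidef)
    (hR : ∀ k, 1 ≤ k → k ≤ M.T → (M.R k).PosDef) :
    ∀ j, j ≤ M.T - 1 → ((M.bif j).2).PosSemidef := by
  intro j
  induction j with
  | zero =>
    intro _
    simp only [LGModel.bif]
    have := psd_congT ((hR M.T hT le_rfl).inv).posSemidef (M.H M.T)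
    simpa [Matrix.mul_assoc] using this
  | succ j ih =>
    intro hj
    have hprev := ih (by omega)
    have hQk := hQ (M.T - j - 1) (by omega)
    have hRk := hR (M.T - j - 1) (by omega) (by omega)
    have hu : IsUnit (1 + (M.bif j).2 * M.Q (M.T - j - 1)).det :=
      isUnit_one_add_psd hprev hQk
    show ((M.bif (j + 1)).2).PosSemidef
    simp only [LGModel.bif]
    have h1 : ((M.F (M.T - j - 1))ᵀ * (1 + (M.bif j).2 * M.Q (M.T - j - 1))⁻¹ *
        (M.bif j).2 * M.F (M.T - j - 1)).PosSemidef := by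
      have := psd_congT (psdBJ hprev hQk hu) (M.F (M.T - j - 1))
      simpa [Matrix.mul_assoc] using this
    have h2 : ((M.H (M.T - j - 1))ᵀ * (M.R (M.T - j - 1))⁻¹ *
        M.H (M.T - j - 1)).PosSemidef := by
      have := psd_congT (hRk.inv).posSemidef (M.H (M.T - j - 1))
      simpa [Matrix.mul_assoc] using this
    exact h1.add h2

end TwoFilterPSD

section TwoFilterStep

variable {n m : ℕ}

private lemma auxStep (M : LGModel n m) (hT : 1 ≤ M.T)
    (hQ : ∀ k, k < M.T → (M.Q k).PosSemidef)
    (hR : ∀ k, 1 ≤ k → k ≤ M.T → (M.R k).PosDef)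
    (hP0 : M.P0.PosSemidef)
    (hPp : ∀ k, 1 ≤ k → k ≤ M.T - 1 → IsUnit (M.F k * (M.kf k).2 * (M.F k)ᵀ + M.Q k))
    (j : ℕ) (hj : j + 1 ≤ M.T - 1)
    (ihm : (1 + (M.F (M.T - j - 1) * (M.kf (M.T - j - 1)).2 * (M.F (M.T - j - 1))ᵀ +
            M.Q (M.T - j - 1)) * (M.bif j).2)⁻¹ *ᵥ
          ((M.F (M.T - j - 1) *ᵥ (M.kf (M.T - j - 1)).1 + M.u (M.T - j - 1)) +
            (M.F (M.T - j - 1) * (M.kf (M.T - j - 1)).2 * (M.F (M.T - j - 1))ᵀ +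
            M.Q (M.T - j - 1)) *ᵥ (M.bif j).1) = (M.rts j).1)
    (ihc : (1 + (M.F (M.T - j - 1) * (M.kf (M.T - j - 1)).2 * (M.F (M.T - j - 1))ᵀ +
            M.Q (M.T - j - 1)) * (M.bif j).2)⁻¹ *
          (M.F (M.T - j - 1) * (M.kf (M.T - j - 1)).2 * (M.F (M.T - j - 1))ᵀ +
            M.Q (M.T - j - 1)) = (M.rts j).2) :
    IsUnit (1 + (M.kf (M.T - j - 1)).2 * ((M.F (M.T - j - 1))ᵀ *
        (1 + (M.bif j).2 * M.Q (M.T - j - 1))⁻¹ * (M.bif j).2 * M.F (M.T - j - 1))) ∧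
    (1 + (M.kf (M.T - j - 1)).2 * ((M.F (M.T - j - 1))ᵀ *
        (1 + (M.bif j).2 * M.Q (M.T - j - 1))⁻¹ * (M.bif j).2 * M.F (M.T - j - 1)))⁻¹ *ᵥ
      ((M.kf (M.T - j - 1)).1 + (M.kf (M.T - j - 1)).2 *ᵥ
        (((M.F (M.T - j - 1))ᵀ * (1 + (M.bif j).2 * M.Q (M.T - j - 1))⁻¹) *ᵥ
          ((M.bif j).1 - (M.bif j).2 *ᵥ M.u (M.T - j - 1)))) = (M.rts (j + 1)).1 ∧
    (1 + (M.kf (M.T - j - 1)).2 * ((M.F (M.T - j - 1))ᵀ *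
        (1 + (M.bif j).2 * M.Q (M.T - j - 1))⁻¹ * (M.bif j).2 * M.F (M.T - j - 1)))⁻¹ *
      (M.kf (M.T - j - 1)).2 = (M.rts (j + 1)).2 := by
  have hPk : ((M.kf (M.T - j - 1)).2).PosSemidef := kf_psd M hQ hR hP0 _ (by omega)
  have hJb : ((M.bif j).2).PosSemidef := bif_psd M hT hQ hR j (by omega)
  have hQk : (M.Q (M.T - j - 1)).PosSemidef := hQ _ (by omega)
  have hJQ : IsUnit (1 + (M.bif j).2 * M.Q (M.T - j - 1)).det :=
    isUnit_one_add_psd hJb hQk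
  have hPpu : IsUnit (M.F (M.T - j - 1) * (M.kf (M.T - j - 1)).2 * (M.F (M.T - j - 1))ᵀ +
      M.Q (M.T - j - 1)).det :=
    (Matrix.isUnit_iff_isUnit_det _).mp (hPp _ (by omega) (by omega))
  have hPppsd : (M.F (M.T - j - 1) * (M.kf (M.T - j - 1)).2 * (M.F (M.T - j - 1))ᵀ +
      M.Q (M.T - j - 1)).PosSemidef :=
    (psd_congTr hPk (M.F (M.T - j - 1))).add hQk
  have hV : IsUnit (1 + (M.F (M.T - j - 1) * (M.kf (M.T - j - 1)).2 * (M.F (M.T - j - 1))ᵀ +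
      M.Q (M.T - j - 1)) * (M.bif j).2).det := isUnit_one_add_psd hPppsd hJb
  have hJ' : ((M.F (M.T - j - 1))ᵀ * (1 + (M.bif j).2 * M.Q (M.T - j - 1))⁻¹ *
      (M.bif j).2 * M.F (M.T - j - 1)).PosSemidef := by
    have := psd_congT (psdBJ hJb hQk hJQ) (M.F (M.T - j - 1))
    simpa [Matrix.mul_assoc] using this
  have hU : IsUnit (1 + (M.kf (M.T - j - 1)).2 * ((M.F (M.T - j - 1))ᵀ *
      (1 + (M.bif j).2 * M.Q (M.T - j - 1))⁻¹ * (M.bif j).2 * M.F (M.T - j - 1))).det :=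
    isUnit_one_add_psd hPk hJ'
  have hcov := stepCov (P := (M.kf (M.T - j - 1)).2) (F := M.F (M.T - j - 1))
    (Q := M.Q (M.T - j - 1)) (J := (M.bif j).2) rfl (psd_symm hPk) (psd_symm hQk)
    hJQ hPpu hV hU
  have hmean := stepMean (P := (M.kf (M.T - j - 1)).2) (F := M.F (M.T - j - 1))
    (Q := M.Q (M.T - j - 1)) (J := (M.bif j).2) rfl hJQ hPpu hV hU
    (M.kf (M.T - j - 1)).1 (M.u (M.T - j - 1)) (M.bif j).1
  rw [ihc] at hcov
  rw [ihm] at hmean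
  refine ⟨(Matrix.isUnit_iff_isUnit_det _).mpr hU, ?_, ?_⟩
  · rw [hmean]
    simp only [LGModel.rts]
  · rw [hcov]
    simp only [LGModel.rts]

end TwoFilterStep

section TwoFilterMain

variable {n m : ℕ}

private lemma auxA (M : LGModel n m) (hT : 1 ≤ M.T)
    (hQ : ∀ k, k < M.T → (M.Q k).PosSemidef)
    (hR : ∀ k, 1 ≤ k → k ≤ M.T → (M.R k).PosDef)
    (hP0 : M.P0.PosSemidef)
    (hPp : ∀ k, 1 ≤ k → k ≤ M.T - 1 → IsUnit (M.F k * (M.kf k).2 * (M.F k)ᵀ + M.Q k)) :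
    ∀ j, j ≤ M.T - 1 →
      ((1 + (M.F (M.T - j - 1) * (M.kf (M.T - j - 1)).2 * (M.F (M.T - j - 1))ᵀ +
            M.Q (M.T - j - 1)) * (M.bif j).2)⁻¹ *ᵥ
          ((M.F (M.T - j - 1) *ᵥ (M.kf (M.T - j - 1)).1 + M.u (M.T - j - 1)) +
            (M.F (M.T - j - 1) * (M.kf (M.T - j - 1)).2 * (M.F (M.T - j - 1))ᵀ +
            M.Q (M.T - j - 1)) *ᵥ (M.bif j).1) = (M.rts j).1) ∧
      ((1 + (M.F (M.T - j - 1) * (M.kf (M.T - j - 1)).2 * (M.F (M.T - j - 1))ᵀ +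
            M.Q (M.T - j - 1)) * (M.bif j).2)⁻¹ *
          (M.F (M.T - j - 1) * (M.kf (M.T - j - 1)).2 * (M.F (M.T - j - 1))ᵀ +
            M.Q (M.T - j - 1)) = (M.rts j).2) := by
  intro j
  induction j with
  | zero =>
    intro _
    have e : M.T - 1 + 1 = M.T := by omega
    -- PSD and unit facts at time T
    have hPk : ((M.kf (M.T - 1)).2).PosSemidef := kf_psd M hQ hR hP0 _ (by omega)
    have hQk : (M.Q (M.T - 1)).PosSemidef := hQ _ (by omega)
    have hPppsd : (M.F (M.T - 1) * (M.kf (M.T - 1)).2 * (M.F (M.T - 1))ᵀ +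
        M.Q (M.T - 1)).PosSemidef := (psd_congTr hPk (M.F (M.T - 1))).add hQk
    have hRt : (M.R M.T).PosDef := hR M.T hT le_rfl
    have hRu : IsUnit (M.R M.T).det := hRt.det_pos.ne'.isUnit
    have hSu : IsUnit (M.H M.T * (M.F (M.T - 1) * (M.kf (M.T - 1)).2 * (M.F (M.T - 1))ᵀ +
        M.Q (M.T - 1)) * (M.H M.T)ᵀ + M.R M.T).det :=
      (Matrix.PosDef.posSemidef_add (psd_congTr hPppsd (M.H M.T)) hRt).det_pos.ne'.isUnit
    have hC : ((M.H M.T)ᵀ * (M.R M.T)⁻¹ * M.H M.T).PosSemidef := by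
      have := psd_congT hRt.inv.posSemidef (M.H M.T)
      simpa [Matrix.mul_assoc] using this
    have hEu : IsUnit (1 + (M.F (M.T - 1) * (M.kf (M.T - 1)).2 * (M.F (M.T - 1))ᵀ +
        M.Q (M.T - 1)) * ((M.H M.T)ᵀ * (M.R M.T)⁻¹ * M.H M.T)).det :=
      isUnit_one_add_psd hPppsd hC
    have hrts0 : M.rts 0 = M.kf (M.T - 1 + 1) := by
      simp only [LGModel.rts]; rw [e]
    simp only [Nat.sub_zero, LGModel.bif, hrts0]
    simp only [LGModel.kf]
    rw [e]
    constructor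
    · have hum := updMean (Pp := M.F (M.T - 1) * (M.kf (M.T - 1)).2 * (M.F (M.T - 1))ᵀ +
          M.Q (M.T - 1)) (H := M.H M.T) (R := M.R M.T) hRu hSu
          (M.F (M.T - 1) *ᵥ (M.kf (M.T - 1)).1 + M.u (M.T - 1)) (M.y M.T - M.d M.T)
      rw [sub_right_comm] at hum
      rw [Matrix.mulVec_mulVec]
      exact inv_mulVec_eq hEu hum
    · exact inv_mul_eq hEu (updCov hRu hSu)
  | succ j ih =>
    intro hj
    obtain ⟨ihm, ihc⟩ := ih (by omega)
    obtain ⟨_, hBm, hBc⟩ := auxStep M hT hQ hR hP0 hPp j hj ihm ihc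
    have e1 : M.T - (j + 1) - 1 = M.T - j - 2 := by omega
    have e2 : M.T - j - 2 + 1 = M.T - j - 1 := by omega
    -- facts at time t = M.T - j - 1, with prediction from time M.T - j - 2
    have hPprev : ((M.kf (M.T - j - 2)).2).PosSemidef := kf_psd M hQ hR hP0 _ (by omega)
    have hQ2 : (M.Q (M.T - j - 2)).PosSemidef := hQ _ (by omega)
    have hPppsd : (M.F (M.T - j - 2) * (M.kf (M.T - j - 2)).2 * (M.F (M.T - j - 2))ᵀ +
        M.Q (M.T - j - 2)).PosSemidef := (psd_congTr hPprev (M.F (M.T - j - 2))).add hQ2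
    have hRt : (M.R (M.T - j - 1)).PosDef := hR _ (by omega) (by omega)
    have hRu : IsUnit (M.R (M.T - j - 1)).det := hRt.det_pos.ne'.isUnit
    have hSu : IsUnit (M.H (M.T - j - 1) *
        (M.F (M.T - j - 2) * (M.kf (M.T - j - 2)).2 * (M.F (M.T - j - 2))ᵀ +
          M.Q (M.T - j - 2)) * (M.H (M.T - j - 1))ᵀ + M.R (M.T - j - 1)).det :=
      (Matrix.PosDef.posSemidef_add (psd_congTr hPppsd (M.H (M.T - j - 1))) hRt).det_pos.ne'.isUnit
    have hC : ((M.H (M.T - j - 1))ᵀ * (M.R (M.T - j - 1))⁻¹ * M.H (M.T - j - 1)).PosSemidef := by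
      have := psd_congT hRt.inv.posSemidef (M.H (M.T - j - 1))
      simpa [Matrix.mul_assoc] using this
    have hEu : IsUnit (1 + (M.F (M.T - j - 2) * (M.kf (M.T - j - 2)).2 * (M.F (M.T - j - 2))ᵀ +
        M.Q (M.T - j - 2)) *
        ((M.H (M.T - j - 1))ᵀ * (M.R (M.T - j - 1))⁻¹ * M.H (M.T - j - 1))).det :=
      isUnit_one_add_psd hPppsd hC
    have h12 : M.kf (M.T - j - 1) = M.kf (M.T - j - 2 + 1) := by rw [e2]
    have hPval : (M.kf (M.T - j - 1)).2 =
        (M.F (M.T - j - 2) * (M.kf (M.T - j - 2)).2 * (M.F (M.T - j - 2))ᵀ +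
          M.Q (M.T - j - 2)) -
        (M.F (M.T - j - 2) * (M.kf (M.T - j - 2)).2 * (M.F (M.T - j - 2))ᵀ +
          M.Q (M.T - j - 2)) * (M.H (M.T - j - 1))ᵀ *
          (M.H (M.T - j - 1) *
            (M.F (M.T - j - 2) * (M.kf (M.T - j - 2)).2 * (M.F (M.T - j - 2))ᵀ +
              M.Q (M.T - j - 2)) * (M.H (M.T - j - 1))ᵀ + M.R (M.T - j - 1))⁻¹ *
          M.H (M.T - j - 1) *
          (M.F (M.T - j - 2) * (M.kf (M.T - j - 2)).2 * (M.F (M.T - j - 2))ᵀ +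
            M.Q (M.T - j - 2)) := by
      rw [h12]; simp only [LGModel.kf]; simp only [e2]
    have hxval : (M.kf (M.T - j - 1)).1 =
        (M.F (M.T - j - 2) *ᵥ (M.kf (M.T - j - 2)).1 + M.u (M.T - j - 2)) +
        ((M.F (M.T - j - 2) * (M.kf (M.T - j - 2)).2 * (M.F (M.T - j - 2))ᵀ +
          M.Q (M.T - j - 2)) * (M.H (M.T - j - 1))ᵀ *
          (M.H (M.T - j - 1) *
            (M.F (M.T - j - 2) * (M.kf (M.T - j - 2)).2 * (M.F (M.T - j - 2))ᵀ +
              M.Q (M.T - j - 2)) * (M.H (M.T - j - 1))ᵀ + M.R (M.T - j - 1))⁻¹) *ᵥ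
          (M.y (M.T - j - 1) - M.H (M.T - j - 1) *ᵥ
            (M.F (M.T - j - 2) *ᵥ (M.kf (M.T - j - 2)).1 + M.u (M.T - j - 2)) -
            M.d (M.T - j - 1)) := by
      rw [h12]; simp only [LGModel.kf]; simp only [e2]
    have hEP : (1 + (M.F (M.T - j - 2) * (M.kf (M.T - j - 2)).2 * (M.F (M.T - j - 2))ᵀ +
        M.Q (M.T - j - 2)) *
        ((M.H (M.T - j - 1))ᵀ * (M.R (M.T - j - 1))⁻¹ * M.H (M.T - j - 1))) *
        (M.kf (M.T - j - 1)).2 =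
        M.F (M.T - j - 2) * (M.kf (M.T - j - 2)).2 * (M.F (M.T - j - 2))ᵀ +
          M.Q (M.T - j - 2) := by
      rw [hPval]; exact updCov hRu hSu
    have hEm : (1 + (M.F (M.T - j - 2) * (M.kf (M.T - j - 2)).2 * (M.F (M.T - j - 2))ᵀ +
        M.Q (M.T - j - 2)) *
        ((M.H (M.T - j - 1))ᵀ * (M.R (M.T - j - 1))⁻¹ * M.H (M.T - j - 1))) *ᵥ
        (M.kf (M.T - j - 1)).1 =
        (M.F (M.T - j - 2) *ᵥ (M.kf (M.T - j - 2)).1 + M.u (M.T - j - 2)) +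
        ((M.F (M.T - j - 2) * (M.kf (M.T - j - 2)).2 * (M.F (M.T - j - 2))ᵀ +
          M.Q (M.T - j - 2)) * ((M.H (M.T - j - 1))ᵀ * (M.R (M.T - j - 1))⁻¹)) *ᵥ
          (M.y (M.T - j - 1) - M.d (M.T - j - 1)) := by
      rw [hxval]
      have hum := updMean (Pp := M.F (M.T - j - 2) * (M.kf (M.T - j - 2)).2 *
          (M.F (M.T - j - 2))ᵀ + M.Q (M.T - j - 2)) (H := M.H (M.T - j - 1))
          (R := M.R (M.T - j - 1)) hRu hSu
          (M.F (M.T - j - 2) *ᵥ (M.kf (M.T - j - 2)).1 + M.u (M.T - j - 2))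
          (M.y (M.T - j - 1) - M.d (M.T - j - 1))
      rw [sub_right_comm] at hum
      exact hum
    have factor : (1 + (M.F (M.T - j - 2) * (M.kf (M.T - j - 2)).2 * (M.F (M.T - j - 2))ᵀ +
        M.Q (M.T - j - 2)) *
        ((M.H (M.T - j - 1))ᵀ * (M.R (M.T - j - 1))⁻¹ * M.H (M.T - j - 1))) *
        (1 + (M.kf (M.T - j - 1)).2 * ((M.F (M.T - j - 1))ᵀ *
          (1 + (M.bif j).2 * M.Q (M.T - j - 1))⁻¹ * (M.bif j).2 * M.F (M.T - j - 1))) =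
        1 + (M.F (M.T - j - 2) * (M.kf (M.T - j - 2)).2 * (M.F (M.T - j - 2))ᵀ +
          M.Q (M.T - j - 2)) *
          ((M.F (M.T - j - 1))ᵀ * (1 + (M.bif j).2 * M.Q (M.T - j - 1))⁻¹ * (M.bif j).2 *
            M.F (M.T - j - 1) +
          (M.H (M.T - j - 1))ᵀ * (M.R (M.T - j - 1))⁻¹ * M.H (M.T - j - 1)) := by
      calc (1 + (M.F (M.T - j - 2) * (M.kf (M.T - j - 2)).2 * (M.F (M.T - j - 2))ᵀ +
          M.Q (M.T - j - 2)) *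
          ((M.H (M.T - j - 1))ᵀ * (M.R (M.T - j - 1))⁻¹ * M.H (M.T - j - 1))) *
          (1 + (M.kf (M.T - j - 1)).2 * ((M.F (M.T - j - 1))ᵀ *
            (1 + (M.bif j).2 * M.Q (M.T - j - 1))⁻¹ * (M.bif j).2 * M.F (M.T - j - 1)))
          = (1 + (M.F (M.T - j - 2) * (M.kf (M.T - j - 2)).2 * (M.F (M.T - j - 2))ᵀ +
            M.Q (M.T - j - 2)) *
            ((M.H (M.T - j - 1))ᵀ * (M.R (M.T - j - 1))⁻¹ * M.H (M.T - j - 1))) +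
            ((1 + (M.F (M.T - j - 2) * (M.kf (M.T - j - 2)).2 * (M.F (M.T - j - 2))ᵀ +
              M.Q (M.T - j - 2)) *
              ((M.H (M.T - j - 1))ᵀ * (M.R (M.T - j - 1))⁻¹ * M.H (M.T - j - 1))) *
              (M.kf (M.T - j - 1)).2) * ((M.F (M.T - j - 1))ᵀ *
              (1 + (M.bif j).2 * M.Q (M.T - j - 1))⁻¹ * (M.bif j).2 * M.F (M.T - j - 1)) := by
            noncomm_ring
        _ = _ := by rw [hEP]; noncomm_ring
    have hEx : (1 + (M.F (M.T - j - 2) * (M.kf (M.T - j - 2)).2 * (M.F (M.T - j - 2))ᵀ +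
        M.Q (M.T - j - 2)) *
        ((M.H (M.T - j - 1))ᵀ * (M.R (M.T - j - 1))⁻¹ * M.H (M.T - j - 1))) *ᵥ
        ((M.kf (M.T - j - 1)).1 + (M.kf (M.T - j - 1)).2 *ᵥ
          (((M.F (M.T - j - 1))ᵀ * (1 + (M.bif j).2 * M.Q (M.T - j - 1))⁻¹) *ᵥ
            ((M.bif j).1 - (M.bif j).2 *ᵥ M.u (M.T - j - 1)))) =
        (M.F (M.T - j - 2) *ᵥ (M.kf (M.T - j - 2)).1 + M.u (M.T - j - 2)) +
        (M.F (M.T - j - 2) * (M.kf (M.T - j - 2)).2 * (M.F (M.T - j - 2))ᵀ +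
          M.Q (M.T - j - 2)) *ᵥ
          (((M.F (M.T - j - 1))ᵀ * (1 + (M.bif j).2 * M.Q (M.T - j - 1))⁻¹) *ᵥ
            ((M.bif j).1 - (M.bif j).2 *ᵥ M.u (M.T - j - 1)) +
          ((M.H (M.T - j - 1))ᵀ * (M.R (M.T - j - 1))⁻¹) *ᵥ
            (M.y (M.T - j - 1) - M.d (M.T - j - 1))) := by
      rw [Matrix.mulVec_add, Matrix.mulVec_mulVec, hEm, hEP]
      simp only [Matrix.mulVec_add, Matrix.mulVec_sub, ← Matrix.mulVec_mulVec]
      abel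
    rw [e1]
    simp only [LGModel.bif]
    constructor
    · rw [← factor, Matrix.mul_inv_rev, ← Matrix.mulVec_mulVec,
        inv_mulVec_eq hEu hEx]
      exact hBm
    · rw [← factor, Matrix.mul_inv_rev, Matrix.mul_assoc, inv_mul_eq hEu hEP]
      exact hBc

end TwoFilterMain

/-- Equivalence of the two-filter smoother and the RTS smoother: under the
linear-Gaussian model assumptions, if every predicted covariance
`P_{k+1|k} = F_k P_{k|k} F_kᵀ + Q_k` (for `k = 1, …, T-1`) is invertible, then for
every `k = 1, …, T-1` the matrix `I + P_{k|k} J_{k|k+1:T}` is invertible and the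
two-filter combination formulas reproduce the RTS smoother output:
`(I + P_{k|k} J_{k|k+1:T})⁻¹ (x̄_{k|k} + P_{k|k} η_{k|k+1:T}) = x̄_{k|T}` and
`(I + P_{k|k} J_{k|k+1:T})⁻¹ P_{k|k} = P_{k|T}`. -/
theorem two_filter_eq_rts (M : LGModel n m) (hT : 1 ≤ M.T)
    (hQ : ∀ k, k < M.T → (M.Q k).PosSemidef)
    (hR : ∀ k, 1 ≤ k → k ≤ M.T → (M.R k).PosDef)
    (hP0 : M.P0.PosSemidef)
    (hPp : ∀ k, 1 ≤ k → k ≤ M.T - 1 → IsUnit (M.F k * (M.kf k).2 * (M.F k)ᵀ + M.Q k)) :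
    ∀ k, 1 ≤ k → k ≤ M.T - 1 →
      IsUnit (1 + (M.kf k).2 * (M.bpred k).2) ∧
      (1 + (M.kf k).2 * (M.bpred k).2)⁻¹ *ᵥ ((M.kf k).1 + (M.kf k).2 *ᵥ (M.bpred k).1) =
        (M.rts (M.T - k)).1 ∧
      (1 + (M.kf k).2 * (M.bpred k).2)⁻¹ * (M.kf k).2 = (M.rts (M.T - k)).2 := by
  intro k hk1 hk2
  have hj : (M.T - k - 1) + 1 ≤ M.T - 1 := by omega
  obtain ⟨ihm, ihc⟩ := auxA M hT hQ hR hP0 hPp (M.T - k - 1) (by omega)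
  have B := auxStep M hT hQ hR hP0 hPp (M.T - k - 1) hj ihm ihc
  have ek : M.T - (M.T - k - 1) - 1 = k := by omega
  rw [ek] at B
  have eT : (M.T - k - 1) + 1 = M.T - k := by omega
  rw [eT] at B
  simp only [LGModel.bpred]
  exact B
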